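/- Let π be a partition of a finite linearly ordered set X such that exactly one pair of blocks of π crosses, say the blocks A and B cross each other, and every other pair of blocks of π is non-crossing. Let ρ be a non-crossing partition of A ∪ B (with the order inherited from X). Then the partition of X whose blocks are the blocks of ρ together with the blocks of π other than A and B is non-crossing. -/
import Mathlib

def IsPartitionOn {α : Type*} (Y : Set α) (P : Set (Set α)) : Prop :=
  (∀ S ∈ P, S.Nonempty) ∧ (∀ S ∈ P, ∀ T ∈ P, S ≠ T → Disjoint S T) ∧ ⋃₀ P = Y

def Crosses {α : Type*} (lt : α → α → Prop) (A B : Set α) : Prop :=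
  ∃ a1 ∈ A, ∃ a2 ∈ A, ∃ b1 ∈ B, ∃ b2 ∈ B,
    (lt a1 b1 ∧ lt b1 a2 ∧ lt a2 b2) ∨ (lt b1 a1 ∧ lt a1 b2 ∧ lt b2 a2)

def NonCrossingFam {α : Type*} (lt : α → α → Prop) (P : Set (Set α)) : Prop :=
  ∀ A ∈ P, ∀ B ∈ P, A ≠ B → ¬ Crosses lt A B

lemma crosses_symm {α : Type*} {lt : α → α → Prop} {A B : Set α}
    (h : Crosses lt A B) : Crosses lt B A := by
  obtain ⟨a1, h1, a2, h2, b1, h3, b2, h4, hc⟩ := h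
  exact ⟨b1, h3, b2, h4, a1, h1, a2, h2, hc.symm⟩

/-- Key combinatorial lemma: if `A` crosses `B`, `c1, c2 ∉ A ∪ B`,
some `x ∈ A ∪ B` lies strictly between `c1` and `c2`, and some `y ∈ A ∪ B`
lies strictly outside `[c1, c2]`, then one of `A`, `B` has an element strictly
inside `(c1,c2)` and an element strictly outside `[c1,c2]`. -/
lemma keyLemma {α : Type*} [LinearOrder α] {A B : Set α}
    (hcross : Crosses (· < ·) A B)
    {c1 c2 : α} (h1 : c1 ∉ A ∪ B) (h2 : c2 ∉ A ∪ B)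
    {x y : α} (hx : x ∈ A ∪ B) (hy : y ∈ A ∪ B)
    (hx1 : c1 < x) (hx2 : x < c2) (hyo : y < c1 ∨ c2 < y) :
    (∃ u ∈ A, ∃ v ∈ A, c1 < u ∧ u < c2 ∧ (v < c1 ∨ c2 < v)) ∨
    (∃ u ∈ B, ∃ v ∈ B, c1 < u ∧ u < c2 ∧ (v < c1 ∨ c2 < v)) := by
  obtain ⟨a1, ha1, a2, ha2, b1, hb1, b2, hb2, hc⟩ := hcross
  -- both: a B-element strictly between two A-elements, and an A-element between two B-elements
  have hbmid : ∃ b ∈ B, ∃ a ∈ A, ∃ a' ∈ A, a < b ∧ b < a' := by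
    rcases hc with ⟨p, q, r⟩ | ⟨p, q, r⟩
    · exact ⟨b1, hb1, a1, ha1, a2, ha2, p, q⟩
    · exact ⟨b2, hb2, a1, ha1, a2, ha2, q, r⟩
  have hamid : ∃ a ∈ A, ∃ b ∈ B, ∃ b' ∈ B, b < a ∧ a < b' := by
    rcases hc with ⟨p, q, r⟩ | ⟨p, q, r⟩
    · exact ⟨a2, ha2, b1, hb1, b2, hb2, q, r⟩
    · exact ⟨a1, ha1, b1, hb1, b2, hb2, p, q⟩
  rcases hx with hxA | hxB
  · by_cases hAin : ∀ a ∈ A, c1 < a ∧ a < c2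
    · -- A entirely inside (c1,c2); get a B-element inside, y must be in B
      obtain ⟨b, hb, a, ha, a', ha', hab, hba'⟩ := hbmid
      have hbin : c1 < b ∧ b < c2 :=
        ⟨lt_trans (hAin a ha).1 hab, lt_trans hba' (hAin a' ha').2⟩
      have hyB : y ∈ B := by
        rcases hy with hyA | hyB
        · rcases hyo with h | h
          · exact absurd (hAin y hyA).1 (not_lt.mpr h.le)
          · exact absurd (hAin y hyA).2 (not_lt.mpr h.le)
        · exact hyB
      exact Or.inr ⟨b, hb, y, hyB, hbin.1, hbin.2, hyo⟩
    · push_neg at hAin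
      obtain ⟨a, ha, hao⟩ := hAin
      have hane1 : a ≠ c1 := fun h => h1 (Or.inl (h ▸ ha))
      have hane2 : a ≠ c2 := fun h => h2 (Or.inl (h ▸ ha))
      have : a < c1 ∨ c2 < a := by
        rcases lt_trichotomy a c1 with h | h | h
        · exact Or.inl h
        · exact absurd h hane1
        · exact Or.inr ((hao h).lt_of_ne hane2.symm)
      exact Or.inl ⟨x, hxA, a, ha, hx1, hx2, this⟩
  · by_cases hBin : ∀ b ∈ B, c1 < b ∧ b < c2
    · obtain ⟨a, ha, b, hb, b', hb', hba, hab'⟩ := hamid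
      have hain : c1 < a ∧ a < c2 :=
        ⟨lt_trans (hBin b hb).1 hba, lt_trans hab' (hBin b' hb').2⟩
      have hyA : y ∈ A := by
        rcases hy with hyA | hyB
        · exact hyA
        · rcases hyo with h | h
          · exact absurd (hBin y hyB).1 (not_lt.mpr h.le)
          · exact absurd (hBin y hyB).2 (not_lt.mpr h.le)
      exact Or.inl ⟨a, ha, y, hyA, hain.1, hain.2, hyo⟩
    · push_neg at hBin
      obtain ⟨b, hb, hbo⟩ := hBin
      have hbne1 : b ≠ c1 := fun h => h1 (Or.inr (h ▸ hb))
      have hbne2 : b ≠ c2 := fun h => h2 (Or.inr (h ▸ hb))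
      have : b < c1 ∨ c2 < b := by
        rcases lt_trichotomy b c1 with h | h | h
        · exact Or.inl h
        · exact absurd h hbne1
        · exact Or.inr ((hbo h).lt_of_ne hbne2.symm)
      exact Or.inr ⟨x, hxB, b, hb, hx1, hx2, this⟩

theorem uncross_nonCrossing {α : Type*} [Fintype α] [LinearOrder α]
    (π : Set (Set α)) (hπ : IsPartitionOn Set.univ π)
    (A B : Set α) (hA : A ∈ π) (hB : B ∈ π) (hAB : A ≠ B)
    (hcross : Crosses (· < ·) A B)
    (honly : ∀ C ∈ π, ∀ D ∈ π, Crosses (· < ·) C D →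
      (C = A ∧ D = B) ∨ (C = B ∧ D = A))
    (ρ : Set (Set α)) (hρ : IsPartitionOn (A ∪ B) ρ)
    (hρnc : NonCrossingFam (· < ·) ρ) :
    NonCrossingFam (· < ·) (ρ ∪ (π \ {A, B})) := by
  -- main mixed-case helper: a block of ρ cannot cross an old block T ∉ {A,B}
  have mixed : ∀ S ∈ ρ, ∀ T, T ∈ π \ {A, B} → ¬ Crosses (· < ·) S T := by
    rintro S hS T ⟨hTπ, hTnot⟩ hcr
    have hTA : T ≠ A := fun h => hTnot (by simp [h])
    have hTB : T ≠ B := fun h => hTnot (by simp [h])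
    -- T is disjoint from A ∪ B
    have hTdisj : ∀ t ∈ T, t ∉ A ∪ B := by
      intro t ht hmem
      rcases hmem with h | h
      · exact (hπ.2.1 T hTπ A hA hTA).le_bot ⟨ht, h⟩
      · exact (hπ.2.1 T hTπ B hB hTB).le_bot ⟨ht, h⟩
    -- S ⊆ A ∪ B
    have hSsub : S ⊆ A ∪ B := hρ.2.2 ▸ Set.subset_sUnion_of_mem hS
    obtain ⟨s1, hs1, s2, hs2, t1, ht1, t2, ht2, hc⟩ := hcr
    have hkey : (∃ u ∈ A, ∃ v ∈ A, t1 < u ∧ u < t2 ∧ (v < t1 ∨ t2 < v)) ∨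
        (∃ u ∈ B, ∃ v ∈ B, t1 < u ∧ u < t2 ∧ (v < t1 ∨ t2 < v)) := by
      rcases hc with ⟨p, q, r⟩ | ⟨p, q, r⟩
      · exact keyLemma hcross (hTdisj t1 ht1) (hTdisj t2 ht2)
          (hSsub hs2) (hSsub hs1) q r (Or.inl p)
      · exact keyLemma hcross (hTdisj t1 ht1) (hTdisj t2 ht2)
          (hSsub hs1) (hSsub hs2) p q (Or.inr r)
    -- turn it into a crossing of T with A or with B, contradicting honly
    have : Crosses (· < ·) T A ∨ Crosses (· < ·) T B := by
      rcases hkey with ⟨u, hu, v, hv, h1, h2, h3 | h3⟩ | ⟨u, hu, v, hv, h1, h2, h3 | h3⟩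
      · exact Or.inl ⟨t1, ht1, t2, ht2, v, hv, u, hu, Or.inr ⟨h3, h1, h2⟩⟩
      · exact Or.inl ⟨t1, ht1, t2, ht2, u, hu, v, hv, Or.inl ⟨h1, h2, h3⟩⟩
      · exact Or.inr ⟨t1, ht1, t2, ht2, v, hv, u, hu, Or.inr ⟨h3, h1, h2⟩⟩
      · exact Or.inr ⟨t1, ht1, t2, ht2, u, hu, v, hv, Or.inl ⟨h1, h2, h3⟩⟩
    rcases this with h | h
    · rcases honly T hTπ A hA h with ⟨h', _⟩ | ⟨h', _⟩
      · exact hTA h'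
      · exact hTB h'
    · rcases honly T hTπ B hB h with ⟨h', _⟩ | ⟨h', _⟩
      · exact hTA h'
      · exact hTB h'
  rintro S (hS | hS) T (hT | hT) hST hcr
  · exact hρnc S hS T hT hST hcr
  · exact mixed S hS T hT hcr
  · exact mixed T hT S hS (crosses_symm hcr)
  · rcases honly S hS.1 T hT.1 hcr with ⟨h', _⟩ | ⟨h', _⟩
    · exact hS.2 (by simp [h'])
    · exact hS.2 (by simp [h'])
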